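/- For every prior 𝒟 there exists a signaling scheme Z₀, each of whose signals is either a singleton signal or an equal-revenue binary signal, such that for every k ∈ [n], 4·Σ_{i=1}^k f_𝒟(vᵢ)·cs_{vᵢ}(Z₀) ≥ V_k − max_{i∈[k]} ( vᵢ · Σ_{j=i}^k f_𝒟(vⱼ) ), where V_k = Σ_{i=1}^k vᵢ·f_𝒟(vᵢ). -/

import Mathlib

open Finset MeasureTheory

namespace PD

noncomputable section

/-- Complementary CDF of a mass function `fS` at value `v i`. -/
def G {n : ℕ} (v fS : Fin n → ℝ) (i : Fin n) : ℝ :=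
  ∑ j ∈ Finset.univ.filter (fun j => v i ≤ v j), fS j

/-- A signal is a probability mass function on the values. -/
def IsSignal {n : ℕ} (fS : Fin n → ℝ) : Prop :=
  (∀ i, 0 ≤ fS i) ∧ ∑ i, fS i = 1

/-- The index of the seller's price: the smallest index maximizing `v i * G i`. -/
def priceIdx {n : ℕ} [NeZero n] (v fS : Fin n → ℝ) : Fin n :=
  (Finset.univ.filter (fun i => ∀ j, v j * G v fS j ≤ v i * G v fS i)).min' (by
    haveI : Nonempty (Fin n) := ⟨⟨0, Nat.pos_of_ne_zero (NeZero.ne n)⟩⟩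
    obtain ⟨b, _, hb⟩ := Finset.exists_max_image (Finset.univ : Finset (Fin n))
      (fun i => v i * G v fS i) Finset.univ_nonempty
    exact ⟨b, Finset.mem_filter.mpr ⟨Finset.mem_univ _, fun j => hb j (Finset.mem_univ _)⟩⟩)

/-- Consumer surplus of value `v i` under signal `fS`. -/
def cs {n : ℕ} [NeZero n] (v fS : Fin n → ℝ) (i : Fin n) : ℝ :=
  if v (priceIdx v fS) ≤ v i then v i - v (priceIdx v fS) else 0

/-- Revenue of a signal: the maximum of `v i * G i`. -/
def revSig {n : ℕ} [NeZero n] (v fS : Fin n → ℝ) : ℝ :=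
  Finset.univ.sup' (by
    haveI : Nonempty (Fin n) := ⟨⟨0, Nat.pos_of_ne_zero (NeZero.ne n)⟩⟩
    exact Finset.univ_nonempty) (fun i => v i * G v fS i)

/-- A signaling scheme for prior mass function `f`. -/
structure Scheme (n : ℕ) (f : Fin n → ℝ) where
  Q : ℕ
  sig : Fin Q → Fin n → ℝ
  wt : Fin Q → ℝ
  sig_isSignal : ∀ q, IsSignal (sig q)
  wt_nonneg : ∀ q, 0 ≤ wt q
  wt_sum : ∑ q, wt q = 1
  bayes : ∀ i, ∑ q, wt q * sig q i = f i

/-- Expected consumer surplus of value `v i` under scheme `Z`. -/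
def csZ {n : ℕ} [NeZero n] (v f : Fin n → ℝ) (Z : Scheme n f) (i : Fin n) : ℝ :=
  ∑ q, cs v (Z.sig q) i * (Z.wt q * Z.sig q i / f i)

/-- Expected revenue of a scheme. -/
def revZ {n : ℕ} [NeZero n] (v : Fin n → ℝ) {f : Fin n → ℝ} (Z : Scheme n f) : ℝ :=
  ∑ q, Z.wt q * revSig v (Z.sig q)

/-- A scheme is efficient if on every positive-weight signal, the smallest value
in the support maximizes `v * G`. -/
def Efficient {n : ℕ} (v : Fin n → ℝ) {f : Fin n → ℝ} (Z : Scheme n f) : Prop :=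
  ∀ q, 0 < Z.wt q → ∀ i, (0 < Z.sig q i ∧ ∀ j, 0 < Z.sig q j → i ≤ j) →
    ∀ j, v j * G v (Z.sig q) j ≤ v i * G v (Z.sig q) i

/-- A scheme is monotone if higher values get (weakly) higher expected surplus. -/
def MonotoneScheme {n : ℕ} [NeZero n] (v f : Fin n → ℝ) (Z : Scheme n f) : Prop :=
  ∀ i j : Fin n, v i < v j → csZ v f Z i ≤ csZ v f Z j

/-- A scheme is buyer-optimal if the total expected consumer surplus equals the
expected value minus the Myerson revenue. -/
def BuyerOptimal {n : ℕ} [NeZero n] (v f : Fin n → ℝ) (Z : Scheme n f) : Prop :=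
  ∑ i, f i * csZ v f Z i = (∑ i, f i * v i) - revSig v f

/-- The surplus-mass step function of a scheme: equal to `csZ i` on the quantile
interval `(F(v_{i-1}), F(v_i)]`. -/
def smf {n : ℕ} [NeZero n] (v f : Fin n → ℝ) (Z : Scheme n f) (x : ℝ) : ℝ :=
  ∑ i, if (∑ j ∈ Finset.univ.filter (fun j => j < i), f j) < x ∧
          x ≤ ∑ j ∈ Finset.univ.filter (fun j => j ≤ i), f j
       then csZ v f Z i else 0

/-- Sorted `m`-prefix sum of `g` on `(0,1]`: the infimum of `∫_T g` over
(measurable) subsets `T` of `(0,1]` of total length `m`. -/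
def PF (g : ℝ → ℝ) (m : ℝ) : ℝ :=
  sInf { r : ℝ | ∃ T : Set ℝ, T ⊆ Set.Ioc 0 1 ∧ MeasurableSet T ∧
    volume T = ENNReal.ofReal m ∧ r = ∫ x in T, g x }

/-- Integration `m`-prefix sum of `g`: `∫₀^m g`. -/
def PFV (g : ℝ → ℝ) (m : ℝ) : ℝ := ∫ x in Set.Ioc (0:ℝ) m, g x

/-- A singleton signal puts all mass on one value. -/
def IsSingleton {n : ℕ} (fS : Fin n → ℝ) : Prop :=
  ∃ i : Fin n, fS = fun j => if j = i then 1 else 0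

/-- An equal-revenue binary signal on `v i < v j` puts mass `1 - v i / v j` on
`v i` and `v i / v j` on `v j`. -/
def IsEqRevBinary {n : ℕ} (v : Fin n → ℝ) (fS : Fin n → ℝ) : Prop :=
  ∃ i j : Fin n, v i < v j ∧
    fS = fun l => if l = i then 1 - v i / v j else if l = j then v i / v j else 0

/-- `i` is the smallest value in the support of `fS`. -/
def MinSupp {n : ℕ} (fS : Fin n → ℝ) (i : Fin n) : Prop :=
  0 < fS i ∧ ∀ j, 0 < fS j → i ≤ j

end



noncomputable def db (vv ff : ℕ → ℝ) (n : ℕ) : ℕ → ℕ → ℝ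
  | i, j =>
    if h : i < j ∧ j < n then
      min (ff i / 2 - ∑ j' ∈ (Finset.Ico (i+1) j).attach, db vv ff n i j'.1)
          ((ff j / 2 - ∑ i' ∈ (Finset.range i).attach,
              db vv ff n i'.1 j * (vv i'.1 / (vv j - vv i'.1)))
            * (vv j - vv i) / vv i)
    else 0
  termination_by i j => (j, i)
  decreasing_by
  · exact Prod.Lex.left _ _ (Finset.mem_Ico.mp j'.2).2
  · exact Prod.Lex.right _ (Finset.mem_range.mp i'.2)

/-- remaining demand of `j` after supplies `< i` -/
noncomputable def Dd (vv ff : ℕ → ℝ) (n : ℕ) (j i : ℕ) : ℝ :=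
  ff j / 2 - ∑ i' ∈ Finset.range i, db vv ff n i' j * (vv i' / (vv j - vv i'))

/-- remaining supply of `i` after demands `≤ j` -/
noncomputable def Mm (vv ff : ℕ → ℝ) (n : ℕ) (i j : ℕ) : ℝ :=
  ff i / 2 - ∑ j' ∈ Finset.Ico (i+1) (j+1), db vv ff n i j'

lemma db_eq (vv ff : ℕ → ℝ) (n : ℕ) {i m : ℕ} (h1 : i < m + 1) (h2 : m + 1 < n) :
    db vv ff n i (m+1) = min (Mm vv ff n i m)
      (Dd vv ff n (m+1) i * (vv (m+1) - vv i) / vv i) := by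
  rw [db]
  rw [dif_pos ⟨h1, h2⟩]
  congr 1
  · rw [Mm, Finset.sum_attach]
  · rw [Dd, Finset.sum_attach (Finset.range i)
      (fun i' => db vv ff n i' (m+1) * (vv i' / (vv (m+1) - vv i')))]

lemma db_zero (vv ff : ℕ → ℝ) (n : ℕ) {i j : ℕ} (h : ¬ (i < j ∧ j < n)) :
    db vv ff n i j = 0 := by
  rw [db, dif_neg h]

section Facts
variable (vv ff : ℕ → ℝ) (n : ℕ)
variable (hv1 : ∀ i, i < n → 0 < vv i)
variable (hv2 : ∀ i j, i < j → j < n → vv i < vv j)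
variable (hf1 : ∀ i, i < n → 0 < ff i)

lemma Dd_succ (j i : ℕ) :
    Dd vv ff n j (i+1) = Dd vv ff n j i - db vv ff n i j * (vv i / (vv j - vv i)) := by
  rw [Dd, Dd, Finset.sum_range_succ]; ring

include hv1 hv2 hf1 in
lemma Dd_nonneg {j : ℕ} (hj : j < n) : ∀ i, 0 ≤ Dd vv ff n j i := by
  intro i
  induction i with
  | zero =>
    have := hf1 j hj
    simp only [Dd, Finset.range_zero, Finset.sum_empty]
    linarith
  | succ i ih =>
    rw [Dd_succ]
    by_cases h : i < j ∧ j < n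
    · obtain ⟨m, rfl⟩ : ∃ m, j = m + 1 := ⟨j - 1, by omega⟩
      have ha : 0 < vv i := hv1 i (by omega)
      have hb : 0 < vv (m+1) - vv i := by
        have := hv2 i (m+1) h.1 h.2; linarith
      have h3 : db vv ff n i (m+1) ≤
          Dd vv ff n (m+1) i * (vv (m+1) - vv i) / vv i := by
        rw [db_eq vv ff n h.1 h.2]; exact min_le_right _ _
      have h4 : db vv ff n i (m+1) * (vv i / (vv (m+1) - vv i)) ≤
          (Dd vv ff n (m+1) i * (vv (m+1) - vv i) / vv i) * (vv i / (vv (m+1) - vv i)) :=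
        mul_le_mul_of_nonneg_right h3 (by positivity)
      have h5 : (Dd vv ff n (m+1) i * (vv (m+1) - vv i) / vv i) * (vv i / (vv (m+1) - vv i))
          = Dd vv ff n (m+1) i := by field_simp
      rw [h5] at h4
      linarith
    · rw [db_zero vv ff n h]
      simpa using ih

include hf1 in
lemma Mm_nonneg {i : ℕ} (hi : i < n) : ∀ j, 0 ≤ Mm vv ff n i j := by
  intro j
  induction j with
  | zero =>
    have := hf1 i hi
    rw [Mm, Finset.Ico_eq_empty (by omega), Finset.sum_empty]
    linarith
  | succ j ih =>
    by_cases hij : i ≤ j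
    · have hsplit : Mm vv ff n i (j+1) = Mm vv ff n i j - db vv ff n i (j+1) := by
        rw [Mm, Mm, Finset.sum_Ico_succ_top (by omega)]; ring
      by_cases h : i < j + 1 ∧ j + 1 < n
      · have h3 : db vv ff n i (j+1) ≤ Mm vv ff n i j := by
          rw [db_eq vv ff n h.1 h.2]; exact min_le_left _ _
        rw [hsplit]; linarith
      · rw [hsplit, db_zero vv ff n h]; linarith
    · have := hf1 i hi
      rw [Mm, Finset.Ico_eq_empty (by omega), Finset.sum_empty]
      linarith

include hv1 hv2 hf1 in
lemma db_nonneg (i j : ℕ) : 0 ≤ db vv ff n i j := by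
  by_cases h : i < j ∧ j < n
  · obtain ⟨m, rfl⟩ : ∃ m, j = m + 1 := ⟨j - 1, by omega⟩
    rw [db_eq vv ff n h.1 h.2]
    apply le_min
    · exact Mm_nonneg vv ff n hf1 (by omega) m
    · have ha : 0 < vv i := hv1 i (by omega)
      have hb : 0 < vv (m+1) - vv i := by
        have := hv2 i (m+1) h.1 h.2; linarith
      have := Dd_nonneg vv ff n hv1 hv2 hf1 h.2 i
      positivity
  · rw [db_zero vv ff n h]

include hv1 hv2 hf1 in
lemma Mm_antitone (i : ℕ) : ∀ {j j' : ℕ}, j ≤ j' → Mm vv ff n i j' ≤ Mm vv ff n i j := by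
  intro j j' hjj
  rw [Mm, Mm]
  have hsub : Finset.Ico (i+1) (j+1) ⊆ Finset.Ico (i+1) (j'+1) := by
    apply Finset.Ico_subset_Ico le_rfl; omega
  have := Finset.sum_le_sum_of_subset_of_nonneg hsub
    (fun x _ _ => db_nonneg vv ff n hv1 hv2 hf1 i x)
  linarith

include hv1 hv2 hf1 in
lemma full_service {t k m : ℕ} (hk : k < n) (ht : t < m + 1) (hmk : m + 1 ≤ k)
    (hM : 0 < Mm vv ff n t k) : Dd vv ff n (m+1) (t+1) = 0 := by
  have hmn : m + 1 < n := by omega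
  have hMj : Mm vv ff n t k ≤ Mm vv ff n t m := Mm_antitone vv ff n hv1 hv2 hf1 t (by omega)
  have ha : 0 < vv t := hv1 t (by omega)
  have hb : 0 < vv (m+1) - vv t := by have := hv2 t (m+1) ht hmn; linarith
  have hmin := db_eq vv ff n ht hmn
  by_cases hc : Dd vv ff n (m+1) t * (vv (m+1) - vv t) / vv t ≤ Mm vv ff n t m
  · have hdb : db vv ff n t (m+1) = Dd vv ff n (m+1) t * (vv (m+1) - vv t) / vv t := by
      rw [hmin]; exact min_eq_right hc
    rw [Dd_succ, hdb]
    field_simp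
    ring
  · exfalso
    have hdb : db vv ff n t (m+1) = Mm vv ff n t m := by
      rw [hmin]; exact min_eq_left (le_of_not_ge hc)
    have hsplit : Mm vv ff n t (m+1) = Mm vv ff n t m - db vv ff n t (m+1) := by
      rw [Mm, Mm, Finset.sum_Ico_succ_top (by omega)]; ring
    have h0 : Mm vv ff n t (m+1) = 0 := by rw [hsplit, hdb]; ring
    have := Mm_antitone vv ff n hv1 hv2 hf1 t (show m + 1 ≤ k from hmk)
    linarith

end Facts

noncomputable section

variable {n : ℕ} [NeZero n]

def singSig (i : Fin n) : Fin n → ℝ := fun j => if j = i then 1 else 0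

def pairSig (v : Fin n → ℝ) (i j : Fin n) : Fin n → ℝ :=
  fun l => if l = i then 1 - v i / v j else if l = j then v i / v j else 0

lemma priceIdx_spec (v fS : Fin n → ℝ) (i0 : Fin n)
    (h1 : ∀ l, v l * G v fS l ≤ v i0)
    (h2 : v i0 * G v fS i0 = v i0)
    (h3 : ∀ l, v l * G v fS l = v i0 → i0 ≤ l) :
    priceIdx v fS = i0 := by
  have hi0A : i0 ∈ Finset.univ.filter
      (fun i => ∀ j, v j * G v fS j ≤ v i * G v fS i) := by
    refine Finset.mem_filter.mpr ⟨Finset.mem_univ _, fun j => ?_⟩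
    rw [h2]; exact h1 j
  apply le_antisymm
  · exact Finset.min'_le _ _ hi0A
  · have hm := Finset.min'_mem (Finset.univ.filter
      (fun i => ∀ j, v j * G v fS j ≤ v i * G v fS i)) (by exact ⟨i0, hi0A⟩)
    rw [Finset.mem_filter] at hm
    have hup := h1 (priceIdx v fS)
    have hlow : v i0 ≤ v (priceIdx v fS) * G v fS (priceIdx v fS) := by
      have := hm.2 i0
      rw [h2] at this
      exact this
    exact h3 _ (le_antisymm hup hlow)

lemma G_sing (v : Fin n → ℝ) (i l : Fin n) :
    G v (singSig i) l = if v l ≤ v i then 1 else 0 := by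
  rw [G]; simp only [singSig]
  rw [Finset.sum_ite_eq' (Finset.univ.filter (fun j => v l ≤ v j)) i (fun _ => (1:ℝ))]
  simp

lemma priceIdx_sing (v : Fin n → ℝ) (hv : StrictMono v) (hvpos : ∀ i, 0 < v i)
    (i : Fin n) : priceIdx v (singSig i) = i := by
  apply priceIdx_spec
  · intro l
    rw [G_sing]
    by_cases h : v l ≤ v i
    · rw [if_pos h]; linarith
    · rw [if_neg h]; simp; exact (hvpos i).le
  · rw [G_sing, if_pos le_rfl]; ring
  · intro l hl
    rw [G_sing] at hl
    by_cases h : v l ≤ v i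
    · rw [if_pos h, mul_one] at hl
      exact (hv.injective hl).ge
    · rw [if_neg h, mul_zero] at hl
      exact absurd hl.symm (ne_of_gt (hvpos i))

lemma cs_sing (v : Fin n → ℝ) (hv : StrictMono v) (hvpos : ∀ i, 0 < v i) (i : Fin n) :
    cs v (singSig i) i = 0 := by
  rw [cs, priceIdx_sing v hv hvpos, if_pos le_rfl]; ring

lemma pairSig_split (v : Fin n → ℝ) {i j : Fin n} (hij : i ≠ j) (l : Fin n) :
    pairSig v i j l = (if l = i then 1 - v i / v j else 0) + (if l = j then v i / v j else 0) := by
  simp only [pairSig]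
  by_cases h1 : l = i
  · subst h1; simp [hij]
  · by_cases h2 : l = j
    · subst h2; simp [h1]
    · simp [h1, h2]

lemma G_pair (v : Fin n → ℝ) {i j : Fin n} (hij : i ≠ j) (l : Fin n) :
    G v (pairSig v i j) l = (if v l ≤ v i then 1 - v i / v j else 0)
      + (if v l ≤ v j then v i / v j else 0) := by
  rw [G]
  have : ∀ m ∈ Finset.univ.filter (fun m => v l ≤ v m), pairSig v i j m
      = (if m = i then 1 - v i / v j else 0) + (if m = j then v i / v j else 0) :=
    fun m _ => pairSig_split v hij m
  rw [Finset.sum_congr rfl this, Finset.sum_add_distrib,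
    Finset.sum_ite_eq' _ i (fun _ => 1 - v i / v j),
    Finset.sum_ite_eq' _ j (fun _ => v i / v j)]
  simp

lemma priceIdx_pair (v : Fin n → ℝ) (hv : StrictMono v) (hvpos : ∀ i, 0 < v i)
    {i j : Fin n} (hij : i < j) : priceIdx v (pairSig v i j) = i := by
  have hvij : v i < v j := hv hij
  have hvi := hvpos i
  have hvj := hvpos j
  apply priceIdx_spec
  · intro l
    rw [G_pair v hij.ne]
    by_cases h1 : v l ≤ v i
    · rw [if_pos h1, if_pos (h1.trans hvij.le)]
      have : (1 - v i / v j) + v i / v j = 1 := by ring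
      rw [this, mul_one]; exact h1
    · rw [if_neg h1]
      by_cases h2 : v l ≤ v j
      · rw [if_pos h2]
        rw [zero_add]
        calc v l * (v i / v j) ≤ v j * (v i / v j) :=
              mul_le_mul_of_nonneg_right h2 (by positivity)
          _ = v i := by field_simp
      · rw [if_neg h2, zero_add, mul_zero]; exact hvi.le
  · rw [G_pair v hij.ne, if_pos le_rfl, if_pos hvij.le]
    field_simp
    ring
  · intro l hl
    rw [G_pair v hij.ne] at hl
    by_cases h1 : v l ≤ v i
    · rw [if_pos h1, if_pos (h1.trans hvij.le)] at hl
      have : v l * ((1 - v i / v j) + v i / v j) = v l := by field_simp; ring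
      rw [this] at hl
      exact (hv.injective hl).ge
    · by_cases h2 : v l ≤ v j
      · rw [if_neg h1, if_pos h2, zero_add] at hl
        have h4 : v j * (v i / v j) = v i := by field_simp
        have h5 : (v l - v j) * (v i / v j) = 0 := by
          rw [sub_mul, h4, hl]; ring
        have h6 : v l - v j = 0 := by
          rcases mul_eq_zero.mp h5 with h | h
          · exact h
          · exact absurd h (ne_of_gt (by positivity : (0:ℝ) < v i / v j))
        have hvlj : l = j := hv.injective (by linarith)
        rw [hvlj]
        exact hij.le
      · rw [if_neg h1, if_neg h2] at hl
        simp at hl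
        exact absurd hl.symm (ne_of_gt hvi)

lemma cs_pair_low (v : Fin n → ℝ) (hv : StrictMono v) (hvpos : ∀ i, 0 < v i)
    {i j : Fin n} (hij : i < j) : cs v (pairSig v i j) i = 0 := by
  rw [cs, priceIdx_pair v hv hvpos hij, if_pos le_rfl]; ring

lemma cs_pair_high (v : Fin n → ℝ) (hv : StrictMono v) (hvpos : ∀ i, 0 < v i)
    {i j : Fin n} (hij : i < j) : cs v (pairSig v i j) j = v j - v i := by
  rw [cs, priceIdx_pair v hv hvpos hij, if_pos (hv hij).le]

lemma singSig_isSignal (i : Fin n) : IsSignal (singSig i) := by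
  constructor
  · intro l; simp only [singSig]; by_cases h : l = i <;> simp [h]
  · simp only [singSig]
    rw [Finset.sum_ite_eq' Finset.univ i (fun _ => (1:ℝ))]
    simp

lemma pairSig_isSignal (v : Fin n → ℝ) (hv : StrictMono v) (hvpos : ∀ i, 0 < v i)
    {i j : Fin n} (hij : i < j) : IsSignal (pairSig v i j) := by
  have h1 : v i < v j := hv hij
  have h2 := hvpos i
  have h3 := hvpos j
  constructor
  · intro l
    rw [pairSig]
    by_cases ha : l = i
    · rw [if_pos ha]
      have : v i / v j ≤ 1 := by
        rw [div_le_one h3]; exact h1.le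
      linarith
    · rw [if_neg ha]
      by_cases hb : l = j
      · rw [if_pos hb]; positivity
      · rw [if_neg hb]
  · have : ∀ l ∈ Finset.univ, pairSig v i j l
        = (if l = i then 1 - v i / v j else 0) + (if l = j then v i / v j else 0) :=
      fun l _ => pairSig_split v hij.ne l
    rw [Finset.sum_congr rfl this, Finset.sum_add_distrib,
      Finset.sum_ite_eq' _ i (fun _ => 1 - v i / v j),
      Finset.sum_ite_eq' _ j (fun _ => v i / v j)]
    simp

end


noncomputable section SchemeDef

variable {n : ℕ} [NeZero n] (v f : Fin n → ℝ)

def vnat : ℕ → ℝ := fun i => if h : i < n then v ⟨i, h⟩ else 0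

@[simp] lemma vnat_coe (i : Fin n) : vnat v (i : ℕ) = v i := by
  simp only [vnat, i.isLt, dif_pos, Fin.eta]

abbrev dbN : ℕ → ℕ → ℝ := db (vnat v) (vnat f) n

def gam (i j : Fin n) : ℝ := dbN v f i j * v j / (v j - v i)

def burnSum (l : Fin n) : ℝ := ∑ j ∈ Finset.Ico ((l : ℕ)+1) n, dbN v f l j

def serveSum (l : Fin n) : ℝ :=
  ∑ i ∈ Finset.range (l : ℕ), dbN v f i l * (vnat v i / (v l - vnat v i))

def leftover (l : Fin n) : ℝ := f l - burnSum v f l - serveSum v f l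

def sNum (l : Fin n) : ℝ := ∑ i ∈ Finset.range (l : ℕ), dbN v f i l * vnat v i

def sigAux (p : Fin n × Fin (n+1)) : Fin n → ℝ :=
  if h : (p.2 : ℕ) < n then
    (if p.1 < (⟨p.2, h⟩ : Fin n) then pairSig v p.1 ⟨(p.2 : ℕ), h⟩ else singSig p.1)
  else singSig p.1

def wtAux (p : Fin n × Fin (n+1)) : ℝ :=
  if h : (p.2 : ℕ) < n then
    (if p.1 < (⟨(p.2 : ℕ), h⟩ : Fin n) then gam v f p.1 ⟨(p.2 : ℕ), h⟩ else 0)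
  else leftover v f p.1

lemma sigAux_castSucc (i j : Fin n) :
    sigAux v (i, j.castSucc) = if i < j then pairSig v i j else singSig i := by
  have h : ((j.castSucc : Fin (n+1)) : ℕ) < n := by simp
  simp only [sigAux]
  rw [dif_pos h]
  have e : (⟨((j.castSucc : Fin (n+1)) : ℕ), h⟩ : Fin n) = j := by
    apply Fin.ext; simp
  rw [e]

lemma sigAux_last (i : Fin n) : sigAux v (i, Fin.last n) = singSig i := by
  simp only [sigAux]
  rw [dif_neg (by simp)]

lemma wtAux_castSucc (i j : Fin n) :
    wtAux v f (i, j.castSucc) = if i < j then gam v f i j else 0 := by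
  have h : ((j.castSucc : Fin (n+1)) : ℕ) < n := by simp
  simp only [wtAux]
  rw [dif_pos h]
  have e : (⟨((j.castSucc : Fin (n+1)) : ℕ), h⟩ : Fin n) = j := by
    apply Fin.ext; simp
  rw [e]

lemma wtAux_last (i : Fin n) : wtAux v f (i, Fin.last n) = leftover v f i := by
  simp only [wtAux]
  rw [dif_neg (by simp)]

end SchemeDef

noncomputable section SchemeFacts

variable {n : ℕ} [NeZero n] (v f : Fin n → ℝ)
variable (hv : StrictMono v) (hvpos : ∀ i, 0 < v i) (hf : ∀ i, 0 < f i)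

include hvpos in
lemma hv1' : ∀ i, i < n → 0 < vnat v i := by
  intro i hi
  rw [show i = ((⟨i, hi⟩ : Fin n) : ℕ) from rfl, vnat_coe]
  exact hvpos _

include hv in
lemma hv2' : ∀ i j, i < j → j < n → vnat v i < vnat v j := by
  intro i j hij hj
  have hi : i < n := lt_trans hij hj
  rw [show i = ((⟨i, hi⟩ : Fin n) : ℕ) from rfl, show j = ((⟨j, hj⟩ : Fin n) : ℕ) from rfl,
    vnat_coe, vnat_coe]
  exact hv hij

include hf in
lemma hf1' : ∀ i, i < n → 0 < vnat f i := by
  intro i hi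
  rw [show i = ((⟨i, hi⟩ : Fin n) : ℕ) from rfl, vnat_coe]
  exact hf _

include hv hvpos hf in
lemma dbN_nonneg (i j : ℕ) : 0 ≤ dbN v f i j :=
  db_nonneg (vnat v) (vnat f) n (hv1' v hvpos) (hv2' v hv) (hf1' f hf) i j

include hv hvpos hf in
lemma gam_nonneg {i j : Fin n} (hij : i < j) : 0 ≤ gam v f i j := by
  rw [gam]
  have h1 : 0 < v j := hvpos j
  have h2 : 0 < v j - v i := by have := hv hij; linarith
  have h3 := dbN_nonneg v f hv hvpos hf i j
  positivity

include hv hvpos hf in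
lemma burnSum_nonneg (l : Fin n) : 0 ≤ burnSum v f l :=
  Finset.sum_nonneg (fun j _ => dbN_nonneg v f hv hvpos hf l j)

include hf in
lemma burnSum_le (l : Fin n) : burnSum v f l ≤ f l / 2 := by
  have h0 : (0:ℕ) < n := Nat.pos_of_ne_zero (NeZero.ne n)
  have h1 := Mm_nonneg (vnat v) (vnat f) n (hf1' f hf) l.isLt (n-1)
  rw [Mm] at h1
  have h2 : (n - 1) + 1 = n := by omega
  rw [h2] at h1
  rw [burnSum]
  have h3 : vnat f (l : ℕ) = f l := vnat_coe f l
  rw [h3] at h1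
  linarith

include hv hvpos hf in
lemma serveSum_nonneg (l : Fin n) : 0 ≤ serveSum v f l := by
  apply Finset.sum_nonneg
  intro i hi
  rw [Finset.mem_range] at hi
  have hin : i < n := lt_trans hi l.isLt
  have h1 : 0 < vnat v i := hv1' v hvpos i hin
  have h2 : vnat v i < v l := by
    have := hv2' v hv i (l : ℕ) hi l.isLt
    rwa [vnat_coe] at this
  have h3 := dbN_nonneg v f hv hvpos hf i l
  have h4 : 0 < v l - vnat v i := by linarith
  positivity

include hv hvpos hf in
lemma serveSum_le (l : Fin n) : serveSum v f l ≤ f l / 2 := by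
  have h1 := Dd_nonneg (vnat v) (vnat f) n (hv1' v hvpos) (hv2' v hv) (hf1' f hf)
    l.isLt (l : ℕ)
  rw [Dd] at h1
  have h3 : vnat f (l : ℕ) = f l := vnat_coe f l
  rw [h3] at h1
  rw [serveSum]
  have : ∑ i ∈ Finset.range (l : ℕ), dbN v f i (l : ℕ) * (vnat v i / (v l - vnat v i))
      = ∑ i' ∈ Finset.range (l : ℕ), db (vnat v) (vnat f) n i' (l : ℕ)
        * (vnat v i' / (vnat v (l : ℕ) - vnat v i')) := by
    apply Finset.sum_congr rfl
    intro i _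
    rw [vnat_coe]
  rw [this]
  linarith

include hv hvpos hf in
lemma leftover_nonneg (l : Fin n) : 0 ≤ leftover v f l := by
  have h1 := burnSum_le v f hf l
  have h2 := serveSum_le v f hv hvpos hf l
  rw [leftover]
  linarith

include hv hvpos in
lemma sigAux_isSignal (p : Fin n × Fin (n+1)) : IsSignal (sigAux v p) := by
  rw [sigAux]
  by_cases h : (p.2 : ℕ) < n
  · rw [dif_pos h]
    by_cases h2 : p.1 < (⟨(p.2 : ℕ), h⟩ : Fin n)
    · rw [if_pos h2]; exact pairSig_isSignal v hv hvpos h2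
    · rw [if_neg h2]; exact singSig_isSignal _
  · rw [dif_neg h]; exact singSig_isSignal _

include hv hvpos hf in
lemma wtAux_nonneg (p : Fin n × Fin (n+1)) : 0 ≤ wtAux v f p := by
  rw [wtAux]
  by_cases h : (p.2 : ℕ) < n
  · rw [dif_pos h]
    by_cases h2 : p.1 < (⟨(p.2 : ℕ), h⟩ : Fin n)
    · rw [if_pos h2]; exact gam_nonneg v f hv hvpos hf h2
    · rw [if_neg h2]
  · rw [dif_neg h]; exact leftover_nonneg v f hv hvpos hf p.1

end SchemeFacts

noncomputable section BayesSec

variable {n : ℕ} [NeZero n] (v f : Fin n → ℝ)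
variable (hv : StrictMono v) (hvpos : ∀ i, 0 < v i) (hf : ∀ i, 0 < f i)

lemma sum_fin_lt_to_range (l : Fin n) (g : ℕ → ℝ) :
    ∑ i : Fin n, (if i < l then g (i : ℕ) else 0) = ∑ m ∈ Finset.range (l : ℕ), g m := by
  have h1 : ∀ i : Fin n, (if i < l then g (i : ℕ) else 0)
      = if (i : ℕ) < (l : ℕ) then g (i : ℕ) else 0 := by
    intro i
    by_cases h : i < l
    · rw [if_pos h, if_pos (show (i : ℕ) < (l : ℕ) from h)]
    · rw [if_neg h, if_neg (show ¬ (i : ℕ) < (l : ℕ) from fun hh => h hh)]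
  refine Eq.trans (Finset.sum_congr rfl (fun i _ => h1 i)) ?_
  refine Eq.trans (Fin.sum_univ_eq_sum_range (fun m => if m < (l : ℕ) then g m else 0) n) ?_
  rw [← Finset.sum_filter]
  congr 1
  ext a
  simp only [Finset.mem_filter, Finset.mem_range]
  omega

lemma sum_fin_gt_to_Ico (l : Fin n) (g : ℕ → ℝ) :
    ∑ j : Fin n, (if l < j then g (j : ℕ) else 0) = ∑ m ∈ Finset.Ico ((l : ℕ)+1) n, g m := by
  have h1 : ∀ j : Fin n, (if l < j then g (j : ℕ) else 0)
      = if (l : ℕ) < (j : ℕ) then g (j : ℕ) else 0 := by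
    intro j
    by_cases h : l < j
    · rw [if_pos h, if_pos (show (l : ℕ) < (j : ℕ) from h)]
    · rw [if_neg h, if_neg (show ¬ (l : ℕ) < (j : ℕ) from fun hh => h hh)]
  refine Eq.trans (Finset.sum_congr rfl (fun j _ => h1 j)) ?_
  refine Eq.trans (Fin.sum_univ_eq_sum_range (fun m => if (l : ℕ) < m then g m else 0) n) ?_
  rw [← Finset.sum_filter]
  congr 1
  ext a
  simp only [Finset.mem_filter, Finset.mem_range, Finset.mem_Ico]
  omega

include hv hvpos in
lemma sum1 (l : Fin n) :
    ∑ j : Fin n, (if l < j then gam v f l j * (1 - v l / v j) else 0) = burnSum v f l := by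
  rw [burnSum, ← sum_fin_gt_to_Ico l (fun m => dbN v f (l : ℕ) m)]
  apply Finset.sum_congr rfl
  intro j _
  by_cases h : l < j
  · rw [if_pos h, if_pos h, gam]
    have h1 : 0 < v j := hvpos j
    have h2 : v l < v j := hv h
    have h4 : v j - v l ≠ 0 := by linarith
    have h5 : v j ≠ 0 := by linarith
    field_simp
  · rw [if_neg h, if_neg h]

include hv hvpos in
lemma sum2 (l : Fin n) :
    ∑ i : Fin n, (if i < l then gam v f i l * (v i / v l) else 0) = serveSum v f l := by
  rw [serveSum, ← sum_fin_lt_to_range l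
    (fun m => dbN v f m (l : ℕ) * (vnat v m / (v l - vnat v m)))]
  apply Finset.sum_congr rfl
  intro i _
  by_cases h : i < l
  · rw [if_pos h, if_pos h, gam, vnat_coe]
    have h1 : 0 < v l := hvpos l
    have h2 : v i < v l := hv h
    have h3 : 0 < v i := hvpos i
    have h4 : v l - v i ≠ 0 := by linarith
    have h5 : v l ≠ 0 := by linarith
    field_simp
  · rw [if_neg h, if_neg h]

lemma key_split (l : Fin n) (i j : Fin n) :
    (if i < j then gam v f i j else 0) * (if i < j then pairSig v i j else singSig i) l
    = (if i = l then (if l < j then gam v f l j * (1 - v l / v j) else 0) else 0)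
      + (if j = l then (if i < l then gam v f i l * (v i / v l) else 0) else 0) := by
  by_cases hij : i < j
  · rw [if_pos hij, if_pos hij]
    show gam v f i j * pairSig v i j l = _
    by_cases hi : l = i
    · subst hi
      simp [pairSig, hij, hij.ne']
    · by_cases hj : l = j
      · subst hj
        simp [pairSig, hij, hij.ne, hij.ne']
      · simp [pairSig, hi, hj, Ne.symm hi, Ne.symm hj]
  · rw [if_neg hij, zero_mul]
    by_cases hi : i = l
    · subst hi
      simp [hij]
    · by_cases hj2 : j = l
      · subst hj2
        simp [hij, hi]
      · simp [hi, hj2]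

include hv hvpos in
lemma bayes_aux (l : Fin n) :
    ∑ p : Fin n × Fin (n+1), wtAux v f p * sigAux v p l = f l := by
  rw [Fintype.sum_prod_type]
  have hsplit : ∀ i : Fin n, ∑ o : Fin (n+1), wtAux v f (i, o) * sigAux v (i, o) l
      = (∑ j : Fin n, wtAux v f (i, j.castSucc) * sigAux v (i, j.castSucc) l)
        + wtAux v f (i, Fin.last n) * sigAux v (i, Fin.last n) l :=
    fun i => Fin.sum_univ_castSucc _
  rw [Finset.sum_congr rfl (fun i _ => hsplit i), Finset.sum_add_distrib]
  have hB : ∑ i : Fin n, wtAux v f (i, Fin.last n) * sigAux v (i, Fin.last n) l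
      = leftover v f l := by
    have h1 : ∀ i : Fin n, wtAux v f (i, Fin.last n) * sigAux v (i, Fin.last n) l
        = if i = l then leftover v f i else 0 := by
      intro i
      rw [wtAux_last, sigAux_last]
      simp only [singSig]
      by_cases h : i = l
      · subst h; simp
      · rw [if_neg (fun hh => h hh.symm), if_neg h, mul_zero]
    rw [Finset.sum_congr rfl (fun i _ => h1 i), Finset.sum_ite_eq' Finset.univ l
      (fun i => leftover v f i)]
    simp
  have hA : ∑ i : Fin n, ∑ j : Fin n,
        wtAux v f (i, j.castSucc) * sigAux v (i, j.castSucc) l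
      = burnSum v f l + serveSum v f l := by
    have h1 : ∀ i j : Fin n, wtAux v f (i, j.castSucc) * sigAux v (i, j.castSucc) l
        = (if i = l then (if l < j then gam v f l j * (1 - v l / v j) else 0) else 0)
          + (if j = l then (if i < l then gam v f i l * (v i / v l) else 0) else 0) := by
      intro i j
      rw [wtAux_castSucc, sigAux_castSucc]
      exact key_split v f l i j
    have h2 : ∀ i : Fin n, ∑ j : Fin n,
          wtAux v f (i, j.castSucc) * sigAux v (i, j.castSucc) l
        = (if i = l then ∑ j : Fin n, (if l < j then gam v f l j * (1 - v l / v j) else 0) else 0)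
          + ∑ j : Fin n, (if j = l then (if i < l then gam v f i l * (v i / v l) else 0) else 0) := by
      intro i
      rw [Finset.sum_congr rfl (fun j _ => h1 i j), Finset.sum_add_distrib]
      congr 1
      by_cases h : i = l
      · rw [if_pos h]
        apply Finset.sum_congr rfl
        intro j _
        rw [if_pos h]
      · rw [if_neg h]
        refine Eq.trans (Finset.sum_congr rfl (fun j _ => if_neg h)) ?_
        exact Finset.sum_const_zero
    rw [Finset.sum_congr rfl (fun i _ => h2 i), Finset.sum_add_distrib]
    congr 1
    · rw [Finset.sum_ite_eq' Finset.univ l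
        (fun _ => ∑ j : Fin n, (if l < j then gam v f l j * (1 - v l / v j) else 0))]
      rw [if_pos (Finset.mem_univ l)]
      exact sum1 v f hv hvpos l
    · have h3 : ∀ i : Fin n, ∑ j : Fin n,
          (if j = l then (if i < l then gam v f i l * (v i / v l) else 0) else 0)
          = (if i < l then gam v f i l * (v i / v l) else 0) := by
        intro i
        rw [Finset.sum_ite_eq' Finset.univ l
          (fun _ => if i < l then gam v f i l * (v i / v l) else 0)]
        simp
      rw [Finset.sum_congr rfl (fun i _ => h3 i)]
      exact sum2 v f hv hvpos l
  rw [hA, hB, leftover]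
  ring

end BayesSec

noncomputable section CsZSec

variable {n : ℕ} [NeZero n] (v f : Fin n → ℝ)
variable (hv : StrictMono v) (hvpos : ∀ i, 0 < v i) (hf : ∀ i, 0 < f i)

include hv hvpos hf in
lemma key_split2 (l : Fin n) (i j : Fin n) :
    cs v ((if i < j then pairSig v i j else singSig i)) l
      * ((if i < j then gam v f i j else 0) * (if i < j then pairSig v i j else singSig i) l / f l)
    = if j = l then (if i < l then dbN v f i l * v i / f l else 0) else 0 := by
  by_cases hij : i < j
  · rw [if_pos hij, if_pos hij]
    show cs v (pairSig v i j) l * (gam v f i j * pairSig v i j l / f l) = _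
    by_cases hi : l = i
    · subst hi
      rw [cs_pair_low v hv hvpos hij, zero_mul, if_neg (fun hh => hij.ne' hh)]
    · by_cases hj : l = j
      · subst hj
        rw [cs_pair_high v hv hvpos hij, if_pos rfl, if_pos hij]
        have e1 : pairSig v i l l = v i / v l := by
          simp [pairSig, hij.ne']
        rw [e1, gam]
        have h1 : 0 < v l := hvpos l
        have h2 : v i < v l := hv hij
        have h3 : 0 < v i := hvpos i
        have h4 : v l - v i ≠ 0 := by linarith
        have h5 : v l ≠ 0 := by linarith
        have h6 : f l ≠ 0 := ne_of_gt (hf l)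
        field_simp
      · have e1 : pairSig v i j l = 0 := by
          simp [pairSig, hi, hj]
        rw [e1, if_neg (fun hh => hj hh.symm)]
        ring
  · rw [if_neg hij, if_neg hij]
    show cs v (singSig i) l * (0 * singSig i l / f l) = _
    rw [zero_mul, zero_div, mul_zero]
    by_cases hj : j = l
    · rw [if_pos hj]
      have : ¬ i < l := by rw [← hj]; exact hij
      rw [if_neg this]
    · rw [if_neg hj]

include hv hvpos hf in
lemma csZ_aux (l : Fin n) :
    ∑ p : Fin n × Fin (n+1), cs v (sigAux v p) l * (wtAux v f p * sigAux v p l / f l)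
      = sNum v f l / f l := by
  rw [Fintype.sum_prod_type]
  have hsplit : ∀ i : Fin n,
      ∑ o : Fin (n+1), cs v (sigAux v (i, o)) l * (wtAux v f (i, o) * sigAux v (i, o) l / f l)
      = (∑ j : Fin n, cs v (sigAux v (i, j.castSucc)) l
          * (wtAux v f (i, j.castSucc) * sigAux v (i, j.castSucc) l / f l))
        + cs v (sigAux v (i, Fin.last n)) l
          * (wtAux v f (i, Fin.last n) * sigAux v (i, Fin.last n) l / f l) :=
    fun i => Fin.sum_univ_castSucc _
  rw [Finset.sum_congr rfl (fun i _ => hsplit i), Finset.sum_add_distrib]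
  have hB : ∑ i : Fin n, cs v (sigAux v (i, Fin.last n)) l
      * (wtAux v f (i, Fin.last n) * sigAux v (i, Fin.last n) l / f l) = 0 := by
    refine Eq.trans (Finset.sum_congr rfl (fun i _ => ?_)) Finset.sum_const_zero
    rw [sigAux_last, wtAux_last]
    by_cases h : l = i
    · subst h
      rw [cs_sing v hv hvpos, zero_mul]
    · have : singSig i l = 0 := by simp [singSig, h]
      rw [this, mul_zero, zero_div, mul_zero]
  have hA : ∑ i : Fin n, ∑ j : Fin n, cs v (sigAux v (i, j.castSucc)) l
      * (wtAux v f (i, j.castSucc) * sigAux v (i, j.castSucc) l / f l)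
      = sNum v f l / f l := by
    have h1 : ∀ i j : Fin n, cs v (sigAux v (i, j.castSucc)) l
        * (wtAux v f (i, j.castSucc) * sigAux v (i, j.castSucc) l / f l)
        = if j = l then (if i < l then dbN v f i l * v i / f l else 0) else 0 := by
      intro i j
      rw [wtAux_castSucc, sigAux_castSucc]
      exact key_split2 v f hv hvpos hf l i j
    have h2 : ∀ i : Fin n, ∑ j : Fin n,
        cs v (sigAux v (i, j.castSucc)) l
          * (wtAux v f (i, j.castSucc) * sigAux v (i, j.castSucc) l / f l)
        = (if i < l then dbN v f i l * v i / f l else 0) := by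
      intro i
      rw [Finset.sum_congr rfl (fun j _ => h1 i j), Finset.sum_ite_eq' Finset.univ l
        (fun _ => if i < l then dbN v f i l * v i / f l else 0)]
      simp
    rw [Finset.sum_congr rfl (fun i _ => h2 i)]
    have h3 : ∀ i : Fin n, (if i < l then dbN v f i l * v i / f l else 0)
        = (if i < l then dbN v f (i:ℕ) (l:ℕ) * vnat v (i:ℕ) / f l else 0) := by
      intro i; rw [vnat_coe]
    rw [Finset.sum_congr rfl (fun i _ => h3 i),
      sum_fin_lt_to_range l (fun m => dbN v f m (l : ℕ) * vnat v m / f l),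
      ← Finset.sum_div, sNum]
  rw [hA, hB, add_zero]

end CsZSec

section MainIneq

variable (vv ff : ℕ → ℝ) (n : ℕ)
variable (hv1 : ∀ i, i < n → 0 < vv i)
variable (hv2 : ∀ i j, i < j → j < n → vv i < vv j)
variable (hf1 : ∀ i, i < n → 0 < ff i)

/-- swap of the prefix surplus double sum -/
lemma surplus_swap (k : ℕ) :
    ∑ j ∈ Finset.range (k+1), ∑ i ∈ Finset.range j, db vv ff n i j * vv i
    = ∑ i ∈ Finset.range (k+1), ∑ j ∈ Finset.Ico (i+1) (k+1), db vv ff n i j * vv i := by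
  have h1 : ∀ j ∈ Finset.range (k+1), ∑ i ∈ Finset.range j, db vv ff n i j * vv i
      = ∑ i ∈ Finset.range (k+1), (if i < j then db vv ff n i j * vv i else 0) := by
    intro j hj
    rw [Finset.mem_range] at hj
    rw [← Finset.sum_filter]
    apply Finset.sum_congr
    · ext a
      simp only [Finset.mem_filter, Finset.mem_range]
      omega
    · intros; rfl
  have h2 : ∀ i ∈ Finset.range (k+1), ∑ j ∈ Finset.Ico (i+1) (k+1), db vv ff n i j * vv i
      = ∑ j ∈ Finset.range (k+1), (if i < j then db vv ff n i j * vv i else 0) := by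
    intro i hi
    rw [← Finset.sum_filter]
    apply Finset.sum_congr
    · ext a
      simp only [Finset.mem_filter, Finset.mem_range, Finset.mem_Ico]
      omega
    · intros; rfl
  rw [Finset.sum_congr rfl h1, Finset.sum_congr rfl h2, Finset.sum_comm]

include hv1 hv2 hf1 in
lemma main_ineq {k : ℕ} (hk : k < n) :
    ∃ t, t ≤ k ∧
      ∑ j ∈ Finset.range (k+1), vv j * ff j
      ≤ vv t * (∑ j ∈ Finset.Ico t (k+1), ff j)
        + 4 * ∑ j ∈ Finset.range (k+1), ∑ i ∈ Finset.range j, db vv ff n i j * vv i := by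
  have hex : ∃ i, 0 < Mm vv ff n i k := by
    refine ⟨k, ?_⟩
    rw [Mm, Finset.Ico_eq_empty (by omega), Finset.sum_empty]
    have := hf1 k hk
    linarith
  set t := Nat.find hex with ht
  have htk : t ≤ k := by
    apply Nat.find_le
    rw [Mm, Finset.Ico_eq_empty (by omega), Finset.sum_empty]
    have := hf1 k hk
    linarith
  have htpos : 0 < Mm vv ff n t k := Nat.find_spec hex
  have htmin : ∀ i, i < t → Mm vv ff n i k = 0 := by
    intro i hi
    have h1 := Nat.find_min hex hi
    have h2 := Mm_nonneg vv ff n hf1 (show i < n by omega) k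
    push_neg at h1
    linarith
  refine ⟨t, htk, ?_⟩
  -- surplus in the convenient form
  set SN := ∑ j ∈ Finset.range (k+1), ∑ i ∈ Finset.range j, db vv ff n i j * vv i with hSN
  have hterm : ∀ i, i < k + 1 →
      ∑ j ∈ Finset.Ico (i+1) (k+1), db vv ff n i j * vv i = vv i * (ff i / 2 - Mm vv ff n i k) := by
    intro i hi
    rw [← Finset.sum_mul, Mm]
    ring
  have hSN2 : SN = ∑ i ∈ Finset.range (k+1), vv i * (ff i / 2 - Mm vv ff n i k) := by
    rw [hSN, surplus_swap]
    exact Finset.sum_congr rfl (fun i hi => hterm i (Finset.mem_range.mp hi))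
  have hterm_nonneg : ∀ i ∈ Finset.range (k+1), 0 ≤ vv i * (ff i / 2 - Mm vv ff n i k) := by
    intro i hi
    rw [Finset.mem_range] at hi
    have h1 : 0 ≤ vv i := (hv1 i (by omega)).le
    have h2 : 0 ≤ ff i / 2 - Mm vv ff n i k := by
      rw [Mm]
      have := Finset.sum_nonneg
        (fun j (_ : j ∈ Finset.Ico (i+1) (k+1)) => db_nonneg vv ff n hv1 hv2 hf1 i j)
      linarith
    positivity
  -- Step A
  have stepA : ∑ i ∈ Finset.range t, vv i * ff i ≤ 2 * SN := by
    have hA1 : ∑ i ∈ Finset.range t, vv i * ff i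
        = 2 * ∑ i ∈ Finset.range t, vv i * (ff i / 2 - Mm vv ff n i k) := by
      rw [Finset.mul_sum]
      apply Finset.sum_congr rfl
      intro i hi
      rw [htmin i (Finset.mem_range.mp hi)]
      ring
    rw [hA1, hSN2]
    have hsub : Finset.range t ⊆ Finset.range (k+1) := by
      apply Finset.range_subset_range.mpr; omega
    have := Finset.sum_le_sum_of_subset_of_nonneg hsub
      (fun i hi _ => hterm_nonneg i hi)
    linarith
  -- Step B
  have sj_nonneg : ∀ j ∈ Finset.range (k+1), 0 ≤ ∑ i ∈ Finset.range j, db vv ff n i j * vv i := by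
    intro j hj
    apply Finset.sum_nonneg
    intro i hi
    rw [Finset.mem_range] at hi hj
    exact mul_nonneg (db_nonneg vv ff n hv1 hv2 hf1 i j) (hv1 i (by omega)).le
  have stepB : ∑ j ∈ Finset.Ico (t+1) (k+1), (vv j - vv t) * ff j ≤ 2 * SN := by
    have hB1 : ∀ j ∈ Finset.Ico (t+1) (k+1), (vv j - vv t) * ff j
        ≤ 2 * ∑ i ∈ Finset.range j, db vv ff n i j * vv i := by
      intro j hj
      rw [Finset.mem_Ico] at hj
      obtain ⟨hj1, hj2⟩ := hj
      have hjn : j < n := by omega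
      have hfull : Dd vv ff n j (t+1) = 0 := by
        obtain ⟨m, rfl⟩ : ∃ m, j = m + 1 := ⟨j - 1, by omega⟩
        exact full_service vv ff n hv1 hv2 hf1 hk (by omega) (by omega) htpos
      rw [Dd] at hfull
      have hserve : ff j / 2 = ∑ i ∈ Finset.range (t+1), db vv ff n i j * (vv i / (vv j - vv i)) := by
        linarith
      have hper : ∀ i ∈ Finset.range (t+1),
          db vv ff n i j * (vv i / (vv j - vv i)) * (vv j - vv t) ≤ db vv ff n i j * vv i := by
        intro i hi
        rw [Finset.mem_range] at hi
        have hit : i ≤ t := by omega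
        have hvi : 0 < vv i := hv1 i (by omega)
        have hvit : vv i ≤ vv t := by
          rcases Nat.lt_or_ge i t with h | h
          · exact (hv2 i t h (by omega)).le
          · have : i = t := by omega
            rw [this]
        have hvtj : vv t < vv j := hv2 t j (by omega) hjn
        have hvij : vv i < vv j := by linarith
        have hdb := db_nonneg vv ff n hv1 hv2 hf1 i j
        have h1 : (vv j - vv t) ≤ (vv j - vv i) := by linarith
        have h2 : 0 < vv j - vv i := by linarith
        calc db vv ff n i j * (vv i / (vv j - vv i)) * (vv j - vv t)
            ≤ db vv ff n i j * (vv i / (vv j - vv i)) * (vv j - vv i) := by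
              apply mul_le_mul_of_nonneg_left h1
              positivity
          _ = db vv ff n i j * vv i := by field_simp
      have hsum1 : (vv j - vv t) * ff j
          = 2 * ∑ i ∈ Finset.range (t+1), db vv ff n i j * (vv i / (vv j - vv i)) * (vv j - vv t) := by
        rw [← Finset.sum_mul, ← hserve]
        ring
      have hsum2 : ∑ i ∈ Finset.range (t+1), db vv ff n i j * (vv i / (vv j - vv i)) * (vv j - vv t)
          ≤ ∑ i ∈ Finset.range (t+1), db vv ff n i j * vv i :=
        Finset.sum_le_sum hper
      have hsum3 : ∑ i ∈ Finset.range (t+1), db vv ff n i j * vv i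
          ≤ ∑ i ∈ Finset.range j, db vv ff n i j * vv i := by
        apply Finset.sum_le_sum_of_subset_of_nonneg
        · apply Finset.range_subset_range.mpr; omega
        · intro i hi _
          rw [Finset.mem_range] at hi
          exact mul_nonneg (db_nonneg vv ff n hv1 hv2 hf1 i j) (hv1 i (by omega)).le
      linarith
    calc ∑ j ∈ Finset.Ico (t+1) (k+1), (vv j - vv t) * ff j
        ≤ ∑ j ∈ Finset.Ico (t+1) (k+1), 2 * ∑ i ∈ Finset.range j, db vv ff n i j * vv i :=
          Finset.sum_le_sum hB1
      _ = 2 * ∑ j ∈ Finset.Ico (t+1) (k+1), ∑ i ∈ Finset.range j, db vv ff n i j * vv i := by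
          rw [Finset.mul_sum]
      _ ≤ 2 * SN := by
          rw [hSN]
          have hsub : Finset.Ico (t+1) (k+1) ⊆ Finset.range (k+1) := by
            intro a ha
            rw [Finset.mem_Ico] at ha
            rw [Finset.mem_range]
            omega
          have := Finset.sum_le_sum_of_subset_of_nonneg hsub (fun j hj _ => sj_nonneg j hj)
          linarith
  -- assembling
  have hsplit1 : ∑ j ∈ Finset.range (k+1), vv j * ff j
      = ∑ j ∈ Finset.range t, vv j * ff j + ∑ j ∈ Finset.Ico t (k+1), vv j * ff j := by
    rw [Finset.range_eq_Ico]
    rw [← Finset.sum_Ico_consecutive _ (Nat.zero_le t) (by omega : t ≤ k+1)]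
    rw [Finset.range_eq_Ico]
  have hsplit2 : ∑ j ∈ Finset.Ico t (k+1), vv j * ff j
      = ∑ j ∈ Finset.Ico t (k+1), (vv j - vv t) * ff j
        + vv t * ∑ j ∈ Finset.Ico t (k+1), ff j := by
    rw [Finset.mul_sum, ← Finset.sum_add_distrib]
    apply Finset.sum_congr rfl
    intros; ring
  have hsplit3 : ∑ j ∈ Finset.Ico t (k+1), (vv j - vv t) * ff j
      = ∑ j ∈ Finset.Ico (t+1) (k+1), (vv j - vv t) * ff j := by
    rw [Finset.sum_eq_sum_Ico_succ_bot (by omega : t < k+1)]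
    simp
  linarith [stepA, stepB, hsplit1, hsplit2, hsplit3]

end MainIneq

noncomputable section FinalAssembly

variable {n : ℕ} [NeZero n] (v f : Fin n → ℝ)
variable (hv : StrictMono v) (hvpos : ∀ i, 0 < v i) (hf : ∀ i, 0 < f i)

lemma sum_filter_le_coe (k : Fin n) (F : Fin n → ℝ) (g : ℕ → ℝ)
    (hFg : ∀ i : Fin n, F i = g (i : ℕ)) :
    ∑ i ∈ Finset.univ.filter (fun i => i ≤ k), F i
      = ∑ m ∈ Finset.range ((k : ℕ)+1), g m := by
  rw [Finset.sum_filter]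
  have h1 : ∀ i : Fin n, (if i ≤ k then F i else 0)
      = (if (i : ℕ) < (k : ℕ)+1 then g (i : ℕ) else 0) := by
    intro i
    by_cases h : i ≤ k
    · rw [if_pos h, if_pos (by exact Nat.lt_succ_of_le h), hFg]
    · rw [if_neg h, if_neg (fun hh => h (by exact Nat.lt_succ_iff.mp hh))]
  refine Eq.trans (Finset.sum_congr rfl (fun i _ => h1 i)) ?_
  refine Eq.trans (Fin.sum_univ_eq_sum_range (fun m => if m < (k : ℕ)+1 then g m else 0) n) ?_
  rw [← Finset.sum_filter]
  congr 1
  ext a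
  simp only [Finset.mem_filter, Finset.mem_range]
  omega

lemma sum_filter_between_coe (t k : Fin n) (F : Fin n → ℝ) (g : ℕ → ℝ)
    (hFg : ∀ j : Fin n, F j = g (j : ℕ)) :
    ∑ j ∈ Finset.univ.filter (fun j => t ≤ j ∧ j ≤ k), F j
      = ∑ m ∈ Finset.Ico (t : ℕ) ((k : ℕ)+1), g m := by
  rw [Finset.sum_filter]
  have h1 : ∀ j : Fin n, (if t ≤ j ∧ j ≤ k then F j else 0)
      = (if (t : ℕ) ≤ (j : ℕ) ∧ (j : ℕ) < (k : ℕ)+1 then g (j : ℕ) else 0) := by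
    intro j
    by_cases h : t ≤ j ∧ j ≤ k
    · rw [if_pos h, if_pos (by exact ⟨h.1, Nat.lt_succ_of_le h.2⟩), hFg]
    · rw [if_neg h, if_neg (fun hh => h (by exact ⟨hh.1, Nat.lt_succ_iff.mp hh.2⟩))]
  refine Eq.trans (Finset.sum_congr rfl (fun j _ => h1 j)) ?_
  refine Eq.trans (Fin.sum_univ_eq_sum_range
    (fun m => if (t : ℕ) ≤ m ∧ m < (k : ℕ)+1 then g m else 0) n) ?_
  rw [← Finset.sum_filter]
  congr 1
  ext a
  simp only [Finset.mem_filter, Finset.mem_range, Finset.mem_Ico]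
  omega

include hv in
lemma sigAux_shape (p : Fin n × Fin (n+1)) :
    IsSingleton (sigAux v p) ∨ IsEqRevBinary v (sigAux v p) := by
  rw [sigAux]
  by_cases h : (p.2 : ℕ) < n
  · rw [dif_pos h]
    by_cases h2 : p.1 < (⟨(p.2 : ℕ), h⟩ : Fin n)
    · rw [if_pos h2]
      right
      exact ⟨p.1, ⟨(p.2 : ℕ), h⟩, hv h2, rfl⟩
    · rw [if_neg h2]
      left
      exact ⟨p.1, rfl⟩
  · rw [dif_neg h]
    left
    exact ⟨p.1, rfl⟩

end FinalAssembly

theorem stmt11 (n : ℕ) [NeZero n] (v f : Fin n → ℝ)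
    (hv : StrictMono v) (hvpos : ∀ i, 0 < v i)
    (hf : ∀ i, 0 < f i) (hsum : ∑ i, f i = 1) :
    ∃ Z : Scheme n f,
      (∀ q, IsSingleton (Z.sig q) ∨ IsEqRevBinary v (Z.sig q)) ∧
      ∀ k : Fin n,
        (∑ i ∈ Finset.univ.filter (fun i => i ≤ k), v i * f i) -
            (Finset.univ.filter (fun i => i ≤ k)).sup'
              ⟨k, by simp⟩
              (fun i => v i * ∑ j ∈ Finset.univ.filter (fun j => i ≤ j ∧ j ≤ k), f j)
          ≤ 4 * ∑ i ∈ Finset.univ.filter (fun i => i ≤ k), f i * csZ v f Z i := by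
  classical
  have hbayes : ∀ l : Fin n, ∑ q : Fin (n*(n+1)),
      wtAux v f (finProdFinEquiv.symm q) * sigAux v (finProdFinEquiv.symm q) l = f l := by
    intro l
    rw [← Equiv.sum_comp (finProdFinEquiv) (fun q => wtAux v f (finProdFinEquiv.symm q)
      * sigAux v (finProdFinEquiv.symm q) l)]
    refine Eq.trans (Finset.sum_congr rfl (fun p _ => by rw [Equiv.symm_apply_apply])) ?_
    exact bayes_aux v f hv hvpos l
  have hsig : ∀ q : Fin (n*(n+1)), IsSignal (sigAux v (finProdFinEquiv.symm q)) :=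
    fun q => sigAux_isSignal v hv hvpos _
  have hwtsum : ∑ q : Fin (n*(n+1)), wtAux v f (finProdFinEquiv.symm q) = 1 := by
    calc ∑ q : Fin (n*(n+1)), wtAux v f (finProdFinEquiv.symm q)
        = ∑ q : Fin (n*(n+1)), ∑ l : Fin n,
            wtAux v f (finProdFinEquiv.symm q) * sigAux v (finProdFinEquiv.symm q) l := by
          apply Finset.sum_congr rfl
          intro q _
          rw [← Finset.mul_sum, (hsig q).2, mul_one]
      _ = ∑ l : Fin n, ∑ q : Fin (n*(n+1)),
            wtAux v f (finProdFinEquiv.symm q) * sigAux v (finProdFinEquiv.symm q) l :=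
          Finset.sum_comm
      _ = ∑ l : Fin n, f l := Finset.sum_congr rfl (fun l _ => hbayes l)
      _ = 1 := hsum
  refine ⟨⟨n*(n+1), fun q => sigAux v (finProdFinEquiv.symm q),
    fun q => wtAux v f (finProdFinEquiv.symm q), hsig,
    fun q => wtAux_nonneg v f hv hvpos hf _, hwtsum, hbayes⟩, ?_, ?_⟩
  · intro q
    exact sigAux_shape v hv _
  · intro k
    set Z : Scheme n f := ⟨n*(n+1), fun q => sigAux v (finProdFinEquiv.symm q),
      fun q => wtAux v f (finProdFinEquiv.symm q), hsig,
      fun q => wtAux_nonneg v f hv hvpos hf _, hwtsum, hbayes⟩ with hZdef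
    have hcsZ : ∀ l : Fin n, csZ v f Z l = sNum v f l / f l := by
      intro l
      rw [csZ]
      have e1 : ∀ q : Fin (n*(n+1)), cs v (Z.sig q) l * (Z.wt q * Z.sig q l / f l)
          = cs v (sigAux v (finProdFinEquiv.symm q)) l
            * (wtAux v f (finProdFinEquiv.symm q) * sigAux v (finProdFinEquiv.symm q) l / f l) :=
        fun q => rfl
      rw [Finset.sum_congr rfl (fun q _ => e1 q)]
      rw [← Equiv.sum_comp (finProdFinEquiv) (fun q => cs v (sigAux v (finProdFinEquiv.symm q)) l
        * (wtAux v f (finProdFinEquiv.symm q) * sigAux v (finProdFinEquiv.symm q) l / f l))]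
      refine Eq.trans (Finset.sum_congr rfl (fun p _ => by rw [Equiv.symm_apply_apply])) ?_
      exact csZ_aux v f hv hvpos hf l
    -- convert both sums to ℕ-sums
    have hVconv : ∑ i ∈ Finset.univ.filter (fun i => i ≤ k), v i * f i
        = ∑ m ∈ Finset.range ((k : ℕ)+1), vnat v m * vnat f m := by
      apply sum_filter_le_coe
      intro i
      rw [vnat_coe, vnat_coe]
    have hSconv : ∑ i ∈ Finset.univ.filter (fun i => i ≤ k), f i * csZ v f Z i
        = ∑ m ∈ Finset.range ((k : ℕ)+1),
            ∑ i ∈ Finset.range m, db (vnat v) (vnat f) n i m * vnat v i := by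
      apply sum_filter_le_coe
      intro i
      rw [hcsZ i, sNum]
      rw [mul_comm, div_mul_cancel₀ _ (ne_of_gt (hf i))]
    obtain ⟨t, htk, hmain⟩ := main_ineq (vnat v) (vnat f) n (hv1' v hvpos) (hv2' v hv)
      (hf1' f hf) (k.isLt)
    set tF : Fin n := ⟨t, by omega⟩ with htF
    have htFk : tF ≤ k := by
      show t ≤ (k : ℕ)
      exact htk
    have hmem : tF ∈ Finset.univ.filter (fun i => i ≤ k) :=
      Finset.mem_filter.mpr ⟨Finset.mem_univ _, htFk⟩
    have hsup := Finset.le_sup' (f := fun i => v i *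
      ∑ j ∈ Finset.univ.filter (fun j => i ≤ j ∧ j ≤ k), f j) hmem
    have hsupconv : v tF * ∑ j ∈ Finset.univ.filter (fun j => tF ≤ j ∧ j ≤ k), f j
        = vnat v t * ∑ m ∈ Finset.Ico t ((k : ℕ)+1), vnat f m := by
      have e2 : ∑ j ∈ Finset.univ.filter (fun j => tF ≤ j ∧ j ≤ k), f j
          = ∑ m ∈ Finset.Ico ((tF : ℕ)) ((k : ℕ)+1), vnat f m := by
        apply sum_filter_between_coe
        intro j
        rw [vnat_coe]
      rw [e2]
      have e3 : v tF = vnat v t := by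
        rw [show t = ((tF : Fin n) : ℕ) from rfl, vnat_coe]
      rw [e3]
    rw [hVconv, hSconv]
    have hfinal : vnat v t * ∑ m ∈ Finset.Ico t ((k : ℕ)+1), vnat f m
        ≤ (Finset.univ.filter (fun i => i ≤ k)).sup' ⟨k, by simp⟩
          (fun i => v i * ∑ j ∈ Finset.univ.filter (fun j => i ≤ j ∧ j ≤ k), f j) := by
      rw [← hsupconv]
      exact hsup
    linarith [hmain, hfinal]

end PD
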